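/- For every integer p ≥ 1 and every real number x, the following identity holds in the ring of formal power series ℝ⟦t⟧: Σ_{n=0}^∞ F_n^p(x)·t^n/n! = (1 − x·σ^p)^{−1}, where the right-hand side is the multiplicative inverse of the power series 1 − x·σ^p (which exists since σ^p has zero constant term). -/

import Mathlib

/-- Stirling numbers of the second kind. -/
def S2 : ℕ → ℕ → ℕ
  | 0, 0 => 1
  | 0, _ + 1 => 0
  | _ + 1, 0 => 0
  | n + 1, m + 1 => (m + 1) * S2 n (m + 1) + S2 n m

/-- Entries `S^p_{n,m}` of the `p`-th power of the Stirling matrix (for `p ≥ 1`;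
the value at `p = 0` is junk). -/
def Sp : ℕ → ℕ → ℕ → ℕ
  | 0, _, _ => 0
  | 1, n, m => S2 n m
  | p + 2, n, m => ∑ k ∈ Finset.range (n + 1), S2 n k * Sp (p + 1) k m

/-- Composition `f ∘ g` of formal power series (the intended meaning when `g` has zero
constant term, in which case `coeff n (g ^ k) = 0` for `k > n`). -/
noncomputable def PSComp (f g : PowerSeries ℝ) : PowerSeries ℝ :=
  PowerSeries.mk fun n =>
    ∑ k ∈ Finset.range (n + 1), (PowerSeries.coeff k f) * (PowerSeries.coeff n (g ^ k))

/-- `σ^p`, the `p`-fold compositional iterate of `exp X - 1` (with `σ^0 = X`). -/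
noncomputable def sigmaP : ℕ → PowerSeries ℝ
  | 0 => PowerSeries.X
  | p + 1 => PSComp (sigmaP p) (PowerSeries.exp ℝ - 1)
/-- Higher order Fubini polynomials: `F_n^p(x) = ∑_{m=0}^n S^p_{n,m} m! x^m`. -/
noncomputable def FubPoly (p n : ℕ) (x : ℝ) : ℝ :=
  ∑ m ∈ Finset.range (n + 1), (Sp p n m : ℝ) * m.factorial * x ^ m


open PowerSeries

noncomputable def E : ℝ⟦X⟧ := PowerSeries.exp ℝ - 1

lemma constE : constantCoeff E = 0 := by simp [E, constantCoeff_exp]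

lemma coeff_pow_zero {g : ℝ⟦X⟧} (hg : constantCoeff g = 0) {n k : ℕ} (h : n < k) :
    coeff n (g ^ k) = 0 := by
  have hd : (X : ℝ⟦X⟧) ^ k ∣ g ^ k := pow_dvd_pow_of_dvd (X_dvd_iff.mpr hg) k
  exact (X_pow_dvd_iff.mp hd) n h

lemma derivExp : d⁄dX ℝ (PowerSeries.exp ℝ) = PowerSeries.exp ℝ := by
  ext n
  rw [coeff_derivative, coeff_exp, coeff_exp]
  simp only [eq_ratCast, Rat.cast_inv, Rat.cast_natCast, one_div]
  rw [Nat.factorial_succ]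
  push_cast
  have h1 : ((n:ℝ)+1) ≠ 0 := by positivity
  have h2 : ((n.factorial : ℝ)) ≠ 0 := by positivity
  field_simp

lemma derivE : d⁄dX ℝ E = E + 1 := by
  rw [E, map_sub, derivExp, Derivation.map_one_eq_zero]; ring

lemma coeff_E_pow : ∀ n m, coeff n (E ^ m) =
    (S2 n m : ℝ) * m.factorial / n.factorial := by
  intro n
  induction n with
  | zero =>
    intro m
    cases m with
    | zero => simp [S2]
    | succ m =>
      rw [coeff_zero_eq_constantCoeff, map_pow, constE, zero_pow (Nat.succ_ne_zero m)]
      simp [S2]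
  | succ n ih =>
    intro m
    cases m with
    | zero => simp [S2, coeff_one]
    | succ m =>
      have hder : d⁄dX ℝ (E ^ (m+1)) = (m+1 : ℕ) • (E ^ (m+1) + E ^ m) := by
        rw [Derivation.leibniz_pow, derivE]
        simp only [Nat.add_sub_cancel, smul_eq_mul]
        congr 1
        ring
      have key : coeff (n+1) (E^(m+1)) * ((n:ℝ)+1)
          = ((m:ℝ)+1) * (coeff n (E^(m+1)) + coeff n (E^m)) := by
        rw [← coeff_derivative, hder, map_nsmul, map_add, nsmul_eq_mul]
        push_cast
        ring
      rw [ih, ih] at key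
      field_simp at key
      push_cast [Nat.factorial_succ] at key
      have hpos : ((n:ℝ)+1) * n.factorial ≠ 0 := by positivity
      rw [show S2 (n+1) (m+1) = (m + 1) * S2 n (m + 1) + S2 n m from rfl]
      push_cast [Nat.factorial_succ]
      rw [eq_div_iff hpos]
      linear_combination key

lemma coeff_PSComp (f g : ℝ⟦X⟧) (n : ℕ) :
    coeff n (PSComp f g) = ∑ k ∈ Finset.range (n + 1),
      coeff k f * coeff n (g ^ k) := by
  simp [PSComp]

lemma coeff_aeval {g : ℝ⟦X⟧} (hg : constantCoeff g = 0) (P : Polynomial ℝ) (n : ℕ) :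
    coeff n (Polynomial.aeval g P) =
      ∑ k ∈ Finset.range (n + 1), P.coeff k * coeff n (g ^ k) := by
  rw [Polynomial.aeval_eq_sum_range, map_sum]
  simp only [map_smul, smul_eq_mul]
  set N := max (P.natDegree + 1) (n + 1) with hN
  have h1 : ∑ i ∈ Finset.range (P.natDegree + 1), P.coeff i * coeff n (g ^ i)
      = ∑ i ∈ Finset.range N, P.coeff i * coeff n (g ^ i) := by
    apply Finset.sum_subset (Finset.range_subset_range.mpr (le_max_left _ _))
    intro i _ hi
    rw [Polynomial.coeff_eq_zero_of_natDegree_lt (by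
      simpa using Finset.mem_range.not.mp hi), zero_mul]
  have h2 : ∑ i ∈ Finset.range (n + 1), P.coeff i * coeff n (g ^ i)
      = ∑ i ∈ Finset.range N, P.coeff i * coeff n (g ^ i) := by
    apply Finset.sum_subset (Finset.range_subset_range.mpr (le_max_right _ _))
    intro i _ hi
    rw [coeff_pow_zero hg (by simpa using Finset.mem_range.not.mp hi), mul_zero]
  rw [h1, h2]

lemma coeff_PSComp_eq_aeval {g : ℝ⟦X⟧} (hg : constantCoeff g = 0) (f : ℝ⟦X⟧)
    {n m : ℕ} (hmn : m ≤ n) :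
    coeff m (PSComp f g) = coeff m (Polynomial.aeval g (trunc (n + 1) f)) := by
  rw [coeff_aeval hg, coeff_PSComp]
  refine Finset.sum_congr rfl fun k hk => ?_
  rw [coeff_trunc, if_pos (by have := Finset.mem_range.mp hk; omega)]

lemma PSComp_mul {g : ℝ⟦X⟧} (hg : constantCoeff g = 0) (f f' : ℝ⟦X⟧) :
    PSComp (f * f') g = PSComp f g * PSComp f' g := by
  ext n
  rw [coeff_PSComp]
  have step1 : ∑ k ∈ Finset.range (n + 1), coeff k (f * f') * coeff n (g ^ k)
      = ∑ k ∈ Finset.range (n + 1),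
        (trunc (n + 1) f * trunc (n + 1) f').coeff k * coeff n (g ^ k) := by
    refine Finset.sum_congr rfl fun k hk => ?_
    rw [coeff_mul_eq_coeff_trunc_mul_trunc f f' (Finset.mem_range.mp hk),
      ← Polynomial.coe_mul, Polynomial.coeff_coe]
  rw [step1, ← coeff_aeval hg, map_mul, PowerSeries.coeff_mul, PowerSeries.coeff_mul]
  refine Finset.sum_congr rfl fun p hp => ?_
  have h := Finset.HasAntidiagonal.mem_antidiagonal.mp hp
  rw [coeff_PSComp_eq_aeval hg f (show p.1 ≤ n by omega),
    coeff_PSComp_eq_aeval hg f' (show p.2 ≤ n by omega)]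

lemma PSComp_one (g : ℝ⟦X⟧) : PSComp 1 g = 1 := by
  ext n
  rw [coeff_PSComp]
  rw [Finset.sum_eq_single 0]
  · simp
  · intro k _ hk; simp [coeff_one, hk]
  · simp

lemma PSComp_pow {g : ℝ⟦X⟧} (hg : constantCoeff g = 0) (f : ℝ⟦X⟧) (m : ℕ) :
    PSComp (f ^ m) g = (PSComp f g) ^ m := by
  induction m with
  | zero => simpa using PSComp_one g
  | succ m ih => rw [pow_succ, pow_succ, PSComp_mul hg, ih]

lemma sigmaP_one : sigmaP 1 = E := by
  ext n
  rw [show sigmaP 1 = PSComp PowerSeries.X (PowerSeries.exp ℝ - 1) from rfl, coeff_PSComp]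
  rw [Finset.sum_eq_single 1]
  · simp [E]
  · intro k _ hk
    simp [PowerSeries.coeff_X, hk]
  · intro h
    have hn : n = 0 := by
      simp only [Finset.mem_range] at h; omega
    subst hn
    simp [coeff_zero_eq_constantCoeff, constE, E]

lemma constantCoeff_sigmaP (p : ℕ) : constantCoeff (sigmaP p) = 0 := by
  induction p with
  | zero => simp [sigmaP]
  | succ p ih =>
    rw [show sigmaP (p + 1) = PSComp (sigmaP p) (PowerSeries.exp ℝ - 1) from rfl,
      ← coeff_zero_eq_constantCoeff_apply, coeff_PSComp]
    simp [coeff_zero_eq_constantCoeff, ih]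

lemma coeff_sigmaP_pow (q : ℕ) (n m : ℕ) :
    coeff n (sigmaP (q + 1) ^ m) = (Sp (q + 1) n m : ℝ) * m.factorial / n.factorial := by
  induction q generalizing n m with
  | zero => rw [sigmaP_one, coeff_E_pow]; rfl
  | succ q ih =>
    have hE : constantCoeff (PowerSeries.exp ℝ - 1) = 0 := constE
    rw [show sigmaP (q + 2) = PSComp (sigmaP (q + 1)) (PowerSeries.exp ℝ - 1) from rfl,
      ← PSComp_pow hE, coeff_PSComp,
      show Sp (q + 2) n m = ∑ k ∈ Finset.range (n + 1), S2 n k * Sp (q + 1) k m from rfl]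
    push_cast
    rw [Finset.sum_mul, Finset.sum_div]
    refine Finset.sum_congr rfl fun k _ => ?_
    rw [ih k m, show (PowerSeries.exp ℝ - 1 : ℝ⟦X⟧) = E from rfl, coeff_E_pow]
    have hk' : (k.factorial : ℝ) ≠ 0 := by positivity
    have hn' : (n.factorial : ℝ) ≠ 0 := by positivity
    field_simp

/-- The EGF of the higher order Fubini polynomials is `(1 - x σ^p)⁻¹`. -/
theorem egf_fubini (p : ℕ) (hp : 1 ≤ p) (x : ℝ) :
    (PowerSeries.mk fun n => FubPoly p n x / n.factorial) =
      (1 - PowerSeries.C x * sigmaP p)⁻¹ := by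
  obtain ⟨q, rfl⟩ : ∃ q, p = q + 1 := ⟨p - 1, by omega⟩
  set σ := sigmaP (q + 1) with hσ
  have hσ0 : constantCoeff σ = 0 := constantCoeff_sigmaP (q + 1)
  have hden : constantCoeff (1 - PowerSeries.C x * σ) ≠ 0 := by
    simp [hσ0]
  rw [PowerSeries.eq_inv_iff_mul_eq_one hden]
  set A := (PowerSeries.mk fun n => FubPoly (q + 1) n x / n.factorial) with hA
  have hc : ∀ b : ℕ, coeff b A =
      ∑ m ∈ Finset.range (b + 1), x ^ m * coeff b (σ ^ m) := by
    intro b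
    rw [hA, coeff_mk, FubPoly, Finset.sum_div]
    refine Finset.sum_congr rfl fun m _ => ?_
    rw [coeff_sigmaP_pow]
    ring
  ext n
  rw [mul_sub, mul_one, map_sub]
  have hrw : A * (PowerSeries.C x * σ) = PowerSeries.C x * (σ * A) := by ring
  rw [hrw, PowerSeries.coeff_C_mul]
  have hσA : coeff n (σ * A) =
      ∑ m ∈ Finset.range (n + 1), x ^ m * coeff n (σ ^ (m + 1)) := by
    rw [PowerSeries.coeff_mul]
    have step1 : ∀ pr ∈ Finset.HasAntidiagonal.antidiagonal n,
        coeff pr.1 σ * coeff pr.2 A =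
          ∑ m ∈ Finset.range (n + 1), x ^ m * (coeff pr.1 σ * coeff pr.2 (σ ^ m)) := by
      intro pr hpr
      have h := Finset.HasAntidiagonal.mem_antidiagonal.mp hpr
      rw [hc pr.2, Finset.mul_sum]
      rw [Finset.sum_subset (Finset.range_subset_range.mpr (by omega : pr.2 + 1 ≤ n + 1))]
      · refine Finset.sum_congr rfl fun m _ => by ring
      · intro m _ hm
        rw [coeff_pow_zero hσ0 (by simpa using Finset.mem_range.not.mp hm), mul_zero, mul_zero]
    rw [Finset.sum_congr rfl step1, Finset.sum_comm]
    refine Finset.sum_congr rfl fun m _ => ?_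
    rw [← Finset.mul_sum, pow_succ', PowerSeries.coeff_mul]
  rw [hσA, hc n, Finset.mul_sum]
  have htel1 : ∑ m ∈ Finset.range (n + 1), x * (x ^ m * coeff n (σ ^ (m + 1)))
      = ∑ m ∈ Finset.range (n + 1), x ^ (m + 1) * coeff n (σ ^ (m + 1)) := by
    refine Finset.sum_congr rfl fun m _ => by ring
  have htel2 : ∑ m ∈ Finset.range (n + 2), x ^ m * coeff n (σ ^ m)
      = (∑ m ∈ Finset.range (n + 1), x ^ (m + 1) * coeff n (σ ^ (m + 1))) +
        x ^ 0 * coeff n (σ ^ 0) :=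
    Finset.sum_range_succ' _ _
  have htel3 : ∑ m ∈ Finset.range (n + 2), x ^ m * coeff n (σ ^ m)
      = ∑ m ∈ Finset.range (n + 1), x ^ m * coeff n (σ ^ m) := by
    rw [Finset.sum_range_succ, coeff_pow_zero hσ0 (by omega), mul_zero, add_zero]
  rw [htel1]
  have : coeff n (σ ^ 0) = coeff n 1 := by rw [pow_zero]
  rw [htel3] at htel2
  rw [← this]
  linarith [htel2]
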